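/- The eccentricity spectrum of the graph G = K_{α₁} ∨ α₂K₁ (join of a complete graph on α₁ vertices with α₂ isolated vertices, i.e., C(α₁,α₂)) is: -1 with multiplicity α₁ - 1, -2 with multiplicity α₂ - 1, and the two simple eigenvalues α₁ + α₂ - 2 - (α₁-1)/2 ± √((α₁ - α₂ - (α₁-1)/2)² + α₁α₂). -/

import Mathlib

open Finset Matrix

/-- The cograph `C(α₁,…,α_l)` obtained by the recursive construction
`C(α₁) = complement of K_{α₁}` and
`C(α₁,…,αᵢ) = complement of (C(α₁,…,αᵢ₋₁) ⊔ K_{αᵢ})`,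
presented by its resulting explicit adjacency relation: two distinct vertices
in the same (0-based) block `i` are adjacent iff `l - 1 - i` is odd, and
vertices in different blocks `a < b` are adjacent iff `l - 1 - b` is even. -/
def Cgraph (l : ℕ) (α : Fin l → ℕ) : SimpleGraph (Σ i : Fin l, Fin (α i)) where
  Adj u v := u ≠ v ∧ ((u.1 = v.1 ∧ Odd (l - 1 - u.1.val)) ∨
      (u.1 ≠ v.1 ∧ Even (l - 1 - max u.1.val v.1.val)))
  symm := by
    constructor
    rintro u v ⟨h1, h2⟩
    refine ⟨h1.symm, ?_⟩
    rcases h2 with ⟨he, ho⟩ | ⟨hne, hev⟩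
    · exact Or.inl ⟨he.symm, he ▸ ho⟩
    · exact Or.inr ⟨hne.symm, by rwa [max_comm]⟩
  loopless := by constructor; rintro u ⟨h, -⟩; exact h rfl

/-- The eccentricity of a vertex: the largest distance from it to any vertex. -/
noncomputable def ecc {V : Type*} [Fintype V] (G : SimpleGraph V) (v : V) : ℕ :=
  Finset.univ.sup fun u => G.dist v u

/-- The eccentricity matrix: entry `d(u,v)` if `d(u,v) = min (e u) (e v)`, else `0`. -/
noncomputable def eccMatrix {V : Type*} [Fintype V] (G : SimpleGraph V) :
    Matrix V V ℝ :=
  Matrix.of fun u v =>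
    if G.dist u v = min (ecc G u) (ecc G v) then (G.dist u v : ℝ) else 0

/-- Geometric multiplicity of `μ` as an eigenvalue of `M`. -/
noncomputable def eigMult {n : Type*} [Fintype n] [DecidableEq n]
    (M : Matrix n n ℝ) (μ : ℝ) : ℕ :=
  Module.finrank ℝ (LinearMap.ker (Matrix.toLin' (M - μ • (1 : Matrix n n ℝ))))

variable (α : Fin 2 → ℕ)

lemma fin2 (i : Fin 2) : i = 0 ∨ i = 1 := by omega

lemma adj_iff (u v : (Σ i : Fin 2, Fin (α i))) :
    (Cgraph 2 α).Adj u v ↔ u ≠ v ∧ (u.1 = 0 ∨ v.1 = 0) := by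
  show (u ≠ v ∧ _) ↔ _
  rcases fin2 u.1 with hu | hu <;> rcases fin2 v.1 with hv | hv <;>
    simp [hu, hv] <;> intro _ <;> simp_all <;> decide

lemma conn (h1 : 1 ≤ α 0) : (Cgraph 2 α).Connected := by
  rw [SimpleGraph.connected_iff]
  constructor
  · intro u v
    by_cases huv : u = v
    · exact huv ▸ SimpleGraph.Reachable.refl u
    by_cases h : u.1 = 0 ∨ v.1 = 0
    · exact (((adj_iff α u v).2 ⟨huv, h⟩)).reachable
    · push_neg at h
      set w : (Σ i : Fin 2, Fin (α i)) := ⟨0, ⟨0, h1⟩⟩ with hw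
      have h1' : (Cgraph 2 α).Adj u w := (adj_iff α u w).2 ⟨by simp [hw]; rintro h'; exact h.1 (by rw [h']), Or.inr rfl⟩
      have h2' : (Cgraph 2 α).Adj w v := (adj_iff α w v).2 ⟨by rintro h'; exact h.2 (by rw [← h']), Or.inl rfl⟩
      exact h1'.reachable.trans h2'.reachable
  · exact ⟨⟨0, ⟨0, h1⟩⟩⟩

lemma dist_adj {u v : (Σ i : Fin 2, Fin (α i))} (huv : u ≠ v) (h : u.1 = 0 ∨ v.1 = 0) :
    (Cgraph 2 α).dist u v = 1 :=
  SimpleGraph.dist_eq_one_iff_adj.2 ((adj_iff α u v).2 ⟨huv, h⟩)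

lemma dist_le_two (h1 : 1 ≤ α 0) (u v : (Σ i : Fin 2, Fin (α i))) :
    (Cgraph 2 α).dist u v ≤ 2 := by
  by_cases huv : u = v
  · rw [huv, SimpleGraph.dist_self]; omega
  by_cases h : u.1 = 0 ∨ v.1 = 0
  · rw [dist_adj α huv h]; omega
  · push_neg at h
    set w : (Σ i : Fin 2, Fin (α i)) := ⟨0, ⟨0, h1⟩⟩ with hw
    have huw : u ≠ w := by rintro h'; exact h.1 (by rw [h'])
    have hwv : w ≠ v := by rintro h'; exact h.2 (by rw [← h'])
    calc (Cgraph 2 α).dist u v ≤ (Cgraph 2 α).dist u w + (Cgraph 2 α).dist w v :=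
          (conn α h1).dist_triangle
      _ ≤ 2 := by rw [dist_adj α huw (Or.inr rfl), dist_adj α hwv (Or.inl rfl)]

lemma dist_block1 (h1 : 1 ≤ α 0) {u v : (Σ i : Fin 2, Fin (α i))} (huv : u ≠ v)
    (hu : u.1 = 1) (hv : v.1 = 1) : (Cgraph 2 α).dist u v = 2 := by
  have hne : (Cgraph 2 α).dist u v ≠ 0 := by
    rw [SimpleGraph.dist_ne_zero_iff_ne_and_reachable]
    exact ⟨huv, (conn α h1).preconnected u v⟩
  have hne1 : (Cgraph 2 α).dist u v ≠ 1 := by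
    intro hd
    have := (adj_iff α u v).1 (SimpleGraph.dist_eq_one_iff_adj.1 hd)
    rcases this with ⟨-, h0 | h0⟩ <;> simp_all
  have := dist_le_two α h1 u v
  omega

lemma ecc_block0 (h1 : 1 ≤ α 0) (h2 : 2 ≤ α 1) {v : (Σ i : Fin 2, Fin (α i))}
    (hv : v.1 = 0) : ecc (Cgraph 2 α) v = 1 := by
  apply le_antisymm
  · apply Finset.sup_le
    intro u _
    by_cases huv : v = u
    · rw [huv, SimpleGraph.dist_self]; omega
    · rw [dist_adj α huv (Or.inl hv)]
  · set w : (Σ i : Fin 2, Fin (α i)) := ⟨1, ⟨0, by omega⟩⟩ with hw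
    have : (Cgraph 2 α).dist v w = 1 := by
      apply dist_adj α _ (Or.inl hv)
      rintro h'; rw [h'] at hv; simp [hw] at hv
    calc 1 = (Cgraph 2 α).dist v w := this.symm
      _ ≤ _ := Finset.le_sup (Finset.mem_univ w)

lemma ecc_block1 (h1 : 1 ≤ α 0) (h2 : 2 ≤ α 1) {v : (Σ i : Fin 2, Fin (α i))}
    (hv : v.1 = 1) : ecc (Cgraph 2 α) v = 2 := by
  apply le_antisymm
  · exact Finset.sup_le fun u _ => dist_le_two α h1 v u
  · obtain ⟨i, hi⟩ := v
    simp only [Fin.isValue] at hv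
    subst hv
    set w : (Σ i : Fin 2, Fin (α i)) := ⟨1, if hi.val = 0 then ⟨1, by omega⟩ else ⟨0, by omega⟩⟩ with hw
    have hne : (⟨1, hi⟩ : Σ i : Fin 2, Fin (α i)) ≠ w := by
      intro h'
      have : hi = (if hi.val = 0 then (⟨1, by omega⟩ : Fin (α 1)) else ⟨0, by omega⟩) := by
        simpa [hw] using h'
      split at this <;> rename_i h <;> simp [Fin.ext_iff] at this <;> omega
    have : (Cgraph 2 α).dist ⟨1, hi⟩ w = 2 := dist_block1 α h1 hne rfl rfl
    calc 2 = (Cgraph 2 α).dist ⟨1, hi⟩ w := this.symm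
      _ ≤ _ := Finset.le_sup (Finset.mem_univ w)

lemma entry (h1 : 1 ≤ α 0) (h2 : 2 ≤ α 1) (u v : (Σ i : Fin 2, Fin (α i))) :
    eccMatrix (Cgraph 2 α) u v =
      if u = v then 0 else if u.1 = 1 ∧ v.1 = 1 then 2 else 1 := by
  unfold eccMatrix
  simp only [Matrix.of_apply]
  by_cases huv : u = v
  · simp [huv, SimpleGraph.dist_self]
  · by_cases h : u.1 = 1 ∧ v.1 = 1
    · rw [dist_block1 α h1 huv h.1 h.2, ecc_block1 α h1 h2 h.1, ecc_block1 α h1 h2 h.2]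
      simp [huv, h]
    · have h' : u.1 = 0 ∨ v.1 = 0 := by
        rcases fin2 u.1 with h0 | h0; exact Or.inl h0
        rcases fin2 v.1 with hb | hb; exact Or.inr hb
        exact absurd ⟨h0, hb⟩ h
      rw [dist_adj α huv h']
      have : min (ecc (Cgraph 2 α) u) (ecc (Cgraph 2 α) v) = 1 := by
        rcases fin2 u.1 with h0 | h0 <;> rcases fin2 v.1 with hb | hb <;>
          simp_all [ecc_block0 α h1 h2, ecc_block1 α h1 h2]
      simp [this, huv, h]

lemma mulVec_block0 (h1 : 1 ≤ α 0) (h2 : 2 ≤ α 1) (x : (Σ i : Fin 2, Fin (α i)) → ℝ)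
    (j : Fin (α 0)) :
    (eccMatrix (Cgraph 2 α)).mulVec x ⟨0, j⟩
      = ((∑ j', x ⟨0, j'⟩) + (∑ j', x ⟨1, j'⟩)) - x ⟨0, j⟩ := by
  have e0 : ∀ j' : Fin (α 0), eccMatrix (Cgraph 2 α) ⟨0,j⟩ ⟨0,j'⟩ * x ⟨0,j'⟩
      = x ⟨0,j'⟩ - (if j' = j then x ⟨0,j'⟩ else 0) := by
    intro j'
    rw [entry α h1 h2]
    by_cases h : j' = j
    · simp [h]
    · simp [h, Sigma.ext_iff]
      exact fun hh => absurd hh.symm h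
  have e1 : ∀ j' : Fin (α 1), eccMatrix (Cgraph 2 α) ⟨0,j⟩ ⟨1,j'⟩ * x ⟨1,j'⟩ = x ⟨1,j'⟩ := by
    intro j'
    rw [entry α h1 h2]
    have : (⟨0,j⟩ : Σ i : Fin 2, Fin (α i)) ≠ ⟨1,j'⟩ := by simp [Sigma.ext_iff]
    simp [this]
  simp only [Matrix.mulVec, dotProduct]
  rw [← Finset.univ_sigma_univ, Finset.sum_sigma, Fin.sum_univ_two]
  rw [Finset.sum_congr rfl fun j' _ => e0 j', Finset.sum_congr rfl fun j' _ => e1 j',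
    Finset.sum_sub_distrib, Finset.sum_ite_eq' Finset.univ j (fun j' => x ⟨0,j'⟩)]
  simp only [Finset.mem_univ, if_true]
  ring

lemma mulVec_block1 (h1 : 1 ≤ α 0) (h2 : 2 ≤ α 1) (x : (Σ i : Fin 2, Fin (α i)) → ℝ)
    (j : Fin (α 1)) :
    (eccMatrix (Cgraph 2 α)).mulVec x ⟨1, j⟩
      = ((∑ j', x ⟨0, j'⟩) + 2 * (∑ j', x ⟨1, j'⟩)) - 2 * x ⟨1, j⟩ := by
  have e0 : ∀ j' : Fin (α 0), eccMatrix (Cgraph 2 α) ⟨1,j⟩ ⟨0,j'⟩ * x ⟨0,j'⟩ = x ⟨0,j'⟩ := by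
    intro j'
    rw [entry α h1 h2]
    have : (⟨1,j⟩ : Σ i : Fin 2, Fin (α i)) ≠ ⟨0,j'⟩ := by simp [Sigma.ext_iff]
    simp [this]
  have e1 : ∀ j' : Fin (α 1), eccMatrix (Cgraph 2 α) ⟨1,j⟩ ⟨1,j'⟩ * x ⟨1,j'⟩
      = 2 * x ⟨1,j'⟩ - (if j' = j then 2 * x ⟨1,j'⟩ else 0) := by
    intro j'
    rw [entry α h1 h2]
    by_cases h : j' = j
    · simp [h]
    · simp [h, Sigma.ext_iff]
      exact fun hh => absurd hh.symm h
  simp only [Matrix.mulVec, dotProduct]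
  rw [← Finset.univ_sigma_univ, Finset.sum_sigma, Fin.sum_univ_two]
  rw [Finset.sum_congr rfl fun j' _ => e0 j', Finset.sum_congr rfl fun j' _ => e1 j',
    Finset.sum_sub_distrib, Finset.sum_ite_eq' Finset.univ j (fun j' => 2 * x ⟨1,j'⟩),
    Finset.mul_sum]
  simp only [Finset.mem_univ, if_true]
  ring

lemma mem_ker_iff (μ : ℝ) (x : (Σ i : Fin 2, Fin (α i)) → ℝ) :
    x ∈ LinearMap.ker (Matrix.toLin' (eccMatrix (Cgraph 2 α) - μ • (1 : Matrix _ _ ℝ))) ↔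
    (eccMatrix (Cgraph 2 α)).mulVec x = μ • x := by
  rw [LinearMap.mem_ker, Matrix.toLin'_apply, Matrix.sub_mulVec, Matrix.smul_mulVec,
    Matrix.one_mulVec, sub_eq_zero]

lemma eig_iff (h1 : 1 ≤ α 0) (h2 : 2 ≤ α 1) (μ : ℝ) (x : (Σ i : Fin 2, Fin (α i)) → ℝ) :
    (eccMatrix (Cgraph 2 α)).mulVec x = μ • x ↔
    ((∀ j : Fin (α 0), ((∑ j', x ⟨0,j'⟩) + (∑ j', x ⟨1,j'⟩)) - x ⟨0,j⟩ = μ * x ⟨0,j⟩) ∧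
     (∀ j : Fin (α 1), ((∑ j', x ⟨0,j'⟩) + 2 * (∑ j', x ⟨1,j'⟩)) - 2 * x ⟨1,j⟩ = μ * x ⟨1,j⟩)) := by
  constructor
  · intro h
    constructor
    · intro j
      have := congrFun h ⟨0, j⟩
      rwa [mulVec_block0 α h1 h2] at this
    · intro j
      have := congrFun h ⟨1, j⟩
      rwa [mulVec_block1 α h1 h2] at this
  · rintro ⟨ha, hb⟩
    funext v
    obtain ⟨i, j⟩ := v
    rcases fin2 i with h | h <;> subst h
    · rw [mulVec_block0 α h1 h2]; exact ha j
    · rw [mulVec_block1 α h1 h2]; exact hb j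

noncomputable def mk2 (a : Fin (α 0) → ℝ) (b : Fin (α 1) → ℝ) : (Σ i : Fin 2, Fin (α i)) → ℝ
  | ⟨⟨0, _⟩, j⟩ => a j
  | ⟨⟨1, _⟩, j⟩ => b j

@[simp] lemma mk2_zero (a : Fin (α 0) → ℝ) (b : Fin (α 1) → ℝ) (j : Fin (α 0)) :
    mk2 α a b ⟨0, j⟩ = a j := rfl

@[simp] lemma mk2_one (a : Fin (α 0) → ℝ) (b : Fin (α 1) → ℝ) (j : Fin (α 1)) :
    mk2 α a b ⟨1, j⟩ = b j := rfl

noncomputable def fA : ((Σ i : Fin 2, Fin (α i)) → ℝ) →ₗ[ℝ] ((Fin (α 1) → ℝ) × ℝ) where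
  toFun x := (fun j => x ⟨1, j⟩, ∑ j', x ⟨0, j'⟩)
  map_add' x y := by
    refine Prod.ext (funext fun j => rfl) ?_
    simp [Finset.sum_add_distrib]
  map_smul' c x := by
    refine Prod.ext (funext fun j => rfl) ?_
    simp [Finset.mul_sum]

lemma cast1 (h2 : 2 ≤ α 1) : ((α 1 : ℝ) - 1) ≠ 0 := by
  have : (2:ℝ) ≤ (α 1 : ℝ) := by exact_mod_cast h2
  linarith

lemma partA (h1 : 1 ≤ α 0) (h2 : 2 ≤ α 1) :
    eigMult (eccMatrix (Cgraph 2 α)) (-1) = α 0 - 1 := by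
  have hker : LinearMap.ker (Matrix.toLin' (eccMatrix (Cgraph 2 α) - (-1 : ℝ) • (1 : Matrix _ _ ℝ)))
      = LinearMap.ker (fA α) := by
    ext x
    rw [LinearMap.mem_ker (f := Matrix.toLin' _), Matrix.toLin'_apply, Matrix.sub_mulVec,
      Matrix.smul_mulVec, Matrix.one_mulVec, sub_eq_zero, eig_iff α h1 h2,
      LinearMap.mem_ker]
    have hfA : fA α x = (fun j => x ⟨1, j⟩, ∑ j', x ⟨0, j'⟩) := rfl
    rw [hfA, Prod.ext_iff]
    constructor
    · rintro ⟨ha, hb⟩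
      have h01 : (∑ j', x ⟨0,j'⟩) + (∑ j', x ⟨1,j'⟩) = 0 := by
        have := ha ⟨0, h1⟩; linarith
      have hc : ∀ j : Fin (α 1), x ⟨1, j⟩ = (∑ j', x ⟨0,j'⟩) + 2 * (∑ j', x ⟨1,j'⟩) :=
        fun j => by have := hb j; linarith
      have hS1' : (∑ j', x ⟨1,j'⟩)
          = (α 1 : ℝ) * ((∑ j', x ⟨0,j'⟩) + 2 * (∑ j', x ⟨1,j'⟩)) := by
        conv_lhs => rw [Finset.sum_congr rfl fun j _ => hc j]
        rw [Finset.sum_const, Finset.card_univ, Fintype.card_fin, nsmul_eq_mul]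
      have hS1z : (∑ j', x ⟨1,j'⟩) = 0 := by
        have h3 : ((α 1 : ℝ) - 1) * (∑ j', x ⟨1,j'⟩) = 0 := by
          linear_combination -hS1' - (α 1 : ℝ) * h01
        rcases mul_eq_zero.1 h3 with h | h
        · exact absurd h (cast1 α h2)
        · exact h
      have hS0z : (∑ j', x ⟨0,j'⟩) = 0 := by linarith
      refine ⟨funext fun j => ?_, by simpa using hS0z⟩
      simp only [Prod.fst_zero, Pi.zero_apply]
      rw [hc j, hS0z, hS1z]; ring
    · rintro ⟨hz, hS0z⟩
      have hzz : ∀ j : Fin (α 1), x ⟨1, j⟩ = 0 := fun j => by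
        have := congrFun hz j; simpa using this
      have hS1z : (∑ j' : Fin (α 1), x ⟨1,j'⟩) = 0 := by
        rw [Finset.sum_congr rfl fun j _ => hzz j, Finset.sum_const, smul_zero]
      have hS0z' : (∑ j' : Fin (α 0), x ⟨0,j'⟩) = 0 := by simpa using hS0z
      constructor
      · intro j
        rw [hS0z', hS1z]; ring
      · intro j
        rw [hS0z', hS1z, hzz j]; ring
  have hsurj : Function.Surjective (fA α) := by
    rintro ⟨w, s⟩
    refine ⟨mk2 α (fun _ => s / (α 0 : ℝ)) w, ?_⟩
    have hfA : fA α (mk2 α (fun _ => s / (α 0 : ℝ)) w)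
        = (fun j => mk2 α (fun _ => s / (α 0 : ℝ)) w ⟨1, j⟩,
            ∑ j', mk2 α (fun _ => s / (α 0 : ℝ)) w ⟨0, j'⟩) := rfl
    rw [hfA]
    refine Prod.ext (funext fun j => by simp) ?_
    simp only [mk2_zero, Finset.sum_const, Finset.card_univ, Fintype.card_fin, nsmul_eq_mul]
    have h0 : (α 0 : ℝ) ≠ 0 := Nat.cast_ne_zero.mpr (by omega)
    rw [mul_comm, div_mul_cancel₀ s h0]
  have hrn := LinearMap.finrank_range_add_finrank_ker (fA α)
  rw [LinearMap.range_eq_top.2 hsurj, finrank_top] at hrn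
  rw [Module.finrank_prod, Module.finrank_fintype_fun_eq_card, Fintype.card_fin,
    Module.finrank_self, Module.finrank_fintype_fun_eq_card, Fintype.card_sigma,
    Fin.sum_univ_two, Fintype.card_fin, Fintype.card_fin] at hrn
  rw [eigMult, hker]
  omega

noncomputable def fB : ((Σ i : Fin 2, Fin (α i)) → ℝ) →ₗ[ℝ] ((Fin (α 0) → ℝ) × ℝ) where
  toFun x := (fun j => x ⟨0, j⟩, ∑ j', x ⟨1, j'⟩)
  map_add' x y := by
    refine Prod.ext (funext fun j => rfl) ?_
    simp [Finset.sum_add_distrib]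
  map_smul' c x := by
    refine Prod.ext (funext fun j => rfl) ?_
    simp [Finset.mul_sum]

lemma partB (h1 : 1 ≤ α 0) (h2 : 2 ≤ α 1) :
    eigMult (eccMatrix (Cgraph 2 α)) (-2) = α 1 - 1 := by
  have hker : LinearMap.ker (Matrix.toLin' (eccMatrix (Cgraph 2 α) - (-2 : ℝ) • (1 : Matrix _ _ ℝ)))
      = LinearMap.ker (fB α) := by
    ext x
    rw [LinearMap.mem_ker (f := Matrix.toLin' _), Matrix.toLin'_apply, Matrix.sub_mulVec,
      Matrix.smul_mulVec, Matrix.one_mulVec, sub_eq_zero, eig_iff α h1 h2,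
      LinearMap.mem_ker]
    have hfB : fB α x = (fun j => x ⟨0, j⟩, ∑ j', x ⟨1, j'⟩) := rfl
    rw [hfB, Prod.ext_iff]
    constructor
    · rintro ⟨ha, hb⟩
      have hB : (∑ j', x ⟨0,j'⟩) + 2 * (∑ j', x ⟨1,j'⟩) = 0 := by
        have := hb ⟨0, by omega⟩; linarith
      have hc : ∀ j : Fin (α 0), x ⟨0, j⟩ = -((∑ j', x ⟨0,j'⟩) + (∑ j', x ⟨1,j'⟩)) :=
        fun j => by have := ha j; linarith
      have hA : (∑ j', x ⟨0,j'⟩)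
          = (α 0 : ℝ) * (-((∑ j', x ⟨0,j'⟩) + (∑ j', x ⟨1,j'⟩))) := by
        conv_lhs => rw [Finset.sum_congr rfl fun j _ => hc j]
        rw [Finset.sum_const, Finset.card_univ, Fintype.card_fin, nsmul_eq_mul]
      have hS1z : (∑ j', x ⟨1,j'⟩) = 0 := by
        have h3 : ((α 0 : ℝ) + 2) * (∑ j', x ⟨1,j'⟩) = 0 := by
          linear_combination -hA + (1 + (α 0 : ℝ)) * hB
        rcases mul_eq_zero.1 h3 with h | h
        · have : (0:ℝ) < (α 0 : ℝ) + 2 := by positivity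
          linarith
        · exact h
      have hS0z : (∑ j', x ⟨0,j'⟩) = 0 := by linarith
      refine ⟨funext fun j => ?_, by simpa using hS1z⟩
      simp only [Prod.fst_zero, Pi.zero_apply]
      rw [hc j, hS0z, hS1z]; ring
    · rintro ⟨hz, hS1z⟩
      have hzz : ∀ j : Fin (α 0), x ⟨0, j⟩ = 0 := fun j => by
        have := congrFun hz j; simpa using this
      have hS0z : (∑ j' : Fin (α 0), x ⟨0,j'⟩) = 0 := by
        rw [Finset.sum_congr rfl fun j _ => hzz j, Finset.sum_const, smul_zero]
      have hS1z' : (∑ j' : Fin (α 1), x ⟨1,j'⟩) = 0 := by simpa using hS1z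
      constructor
      · intro j
        rw [hS0z, hS1z', hzz j]; ring
      · intro j
        rw [hS0z, hS1z']; ring
  have hsurj : Function.Surjective (fB α) := by
    rintro ⟨w, s⟩
    refine ⟨mk2 α w (fun _ => s / (α 1 : ℝ)), ?_⟩
    have hfB : fB α (mk2 α w (fun _ => s / (α 1 : ℝ)))
        = (fun j => mk2 α w (fun _ => s / (α 1 : ℝ)) ⟨0, j⟩,
            ∑ j', mk2 α w (fun _ => s / (α 1 : ℝ)) ⟨1, j'⟩) := rfl
    rw [hfB]
    refine Prod.ext (funext fun j => by simp) ?_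
    simp only [mk2_one, Finset.sum_const, Finset.card_univ, Fintype.card_fin, nsmul_eq_mul]
    have h0 : (α 1 : ℝ) ≠ 0 := Nat.cast_ne_zero.mpr (by omega)
    rw [mul_comm, div_mul_cancel₀ s h0]
  have hrn := LinearMap.finrank_range_add_finrank_ker (fB α)
  rw [LinearMap.range_eq_top.2 hsurj, finrank_top] at hrn
  rw [Module.finrank_prod, Module.finrank_fintype_fun_eq_card, Fintype.card_fin,
    Module.finrank_self, Module.finrank_fintype_fun_eq_card, Fintype.card_sigma,
    Fin.sum_univ_two, Fintype.card_fin, Fintype.card_fin] at hrn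
  rw [eigMult, hker]
  omega

lemma partC (h1 : 1 ≤ α 0) (h2 : 2 ≤ α 1) (lam : ℝ)
    (hq : (lam + 1 - (α 0 : ℝ)) * (lam + 2 - 2 * (α 1 : ℝ)) - (α 0 : ℝ) * (α 1 : ℝ) = 0) :
    eigMult (eccMatrix (Cgraph 2 α)) lam = 1 := by
  have ha0 : (1:ℝ) ≤ (α 0 : ℝ) := by exact_mod_cast h1
  have ha1 : (2:ℝ) ≤ (α 1 : ℝ) := by exact_mod_cast h2
  have hl1 : lam + 1 ≠ 0 := by
    intro h
    have hl : lam = -1 := by linarith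
    rw [hl] at hq
    nlinarith [mul_le_mul ha0 (by linarith : (1:ℝ) ≤ (α 1:ℝ) - 1) (by norm_num) (by linarith)]
  have hl2 : lam + 2 ≠ 0 := by
    intro h
    have hl : lam = -2 := by linarith
    rw [hl] at hq
    nlinarith [mul_le_mul ha0 ha1 (by norm_num) (by linarith)]
  have hα1 : (α 1 : ℝ) ≠ 0 := by linarith
  set v0 : (Σ i : Fin 2, Fin (α i)) → ℝ :=
    mk2 α (fun _ => (α 1 : ℝ)) (fun _ => lam + 1 - (α 0 : ℝ)) with hv0def
  have s0 : (∑ j' : Fin (α 0), v0 ⟨0,j'⟩) = (α 0 : ℝ) * (α 1 : ℝ) := by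
    simp only [hv0def, mk2_zero, Finset.sum_const, Finset.card_univ, Fintype.card_fin,
      nsmul_eq_mul]
  have s1 : (∑ j' : Fin (α 1), v0 ⟨1,j'⟩) = (α 1 : ℝ) * (lam + 1 - (α 0 : ℝ)) := by
    simp only [hv0def, mk2_one, Finset.sum_const, Finset.card_univ, Fintype.card_fin,
      nsmul_eq_mul]
  have hv0 : (eccMatrix (Cgraph 2 α)).mulVec v0 = lam • v0 := by
    rw [eig_iff α h1 h2]
    constructor
    · intro j
      rw [s0, s1]
      simp only [hv0def, mk2_zero]
      ring
    · intro j
      rw [s0, s1]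
      simp only [hv0def, mk2_one]
      linear_combination -hq
  have hne0 : v0 ≠ 0 := by
    intro h
    have := congrFun h ⟨0, ⟨0, h1⟩⟩
    simp only [hv0def, mk2_zero, Pi.zero_apply] at this
    exact hα1 this
  have hker : LinearMap.ker (Matrix.toLin' (eccMatrix (Cgraph 2 α) - lam • (1 : Matrix _ _ ℝ)))
      = Submodule.span ℝ {v0} := by
    ext x
    rw [LinearMap.mem_ker (f := Matrix.toLin' _), Matrix.toLin'_apply, Matrix.sub_mulVec,
      Matrix.smul_mulVec, Matrix.one_mulVec, sub_eq_zero, Submodule.mem_span_singleton]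
    constructor
    · intro h
      rw [eig_iff α h1 h2] at h
      obtain ⟨ha, hb⟩ := h
      set j0 : Fin (α 0) := ⟨0, h1⟩ with hj0
      set j1 : Fin (α 1) := ⟨0, by omega⟩ with hj1
      have hconst0 : ∀ j, x ⟨0,j⟩ = x ⟨0,j0⟩ := by
        intro j
        have e1 := ha j; have e2 := ha j0
        have h3 : (lam+1) * x ⟨0,j⟩ = (lam+1) * x ⟨0,j0⟩ := by linarith
        exact mul_left_cancel₀ hl1 h3
      have hconst1 : ∀ j, x ⟨1,j⟩ = x ⟨1,j1⟩ := by
        intro j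
        have e1 := hb j; have e2 := hb j1
        have h3 : (lam+2) * x ⟨1,j⟩ = (lam+2) * x ⟨1,j1⟩ := by linarith
        exact mul_left_cancel₀ hl2 h3
      have hS0 : (∑ j' : Fin (α 0), x ⟨0,j'⟩) = (α 0 : ℝ) * x ⟨0,j0⟩ := by
        rw [Finset.sum_congr rfl fun j _ => hconst0 j, Finset.sum_const, Finset.card_univ,
          Fintype.card_fin, nsmul_eq_mul]
      have hS1 : (∑ j' : Fin (α 1), x ⟨1,j'⟩) = (α 1 : ℝ) * x ⟨1,j1⟩ := by
        rw [Finset.sum_congr rfl fun j _ => hconst1 j, Finset.sum_const, Finset.card_univ,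
          Fintype.card_fin, nsmul_eq_mul]
      have key : (α 1 : ℝ) * x ⟨1,j1⟩ = (lam + 1 - (α 0 : ℝ)) * x ⟨0,j0⟩ := by
        have e := ha j0
        rw [hS0, hS1] at e
        linarith [e]
      refine ⟨x ⟨0,j0⟩ / (α 1 : ℝ), ?_⟩
      funext v
      obtain ⟨i, j⟩ := v
      rcases fin2 i with h | h <;> subst h
      · simp only [Pi.smul_apply, hv0def, mk2_zero, smul_eq_mul]
        rw [hconst0 j]
        field_simp
      · simp only [Pi.smul_apply, hv0def, mk2_one, smul_eq_mul]
        rw [hconst1 j]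
        field_simp
        linear_combination -key
    · rintro ⟨c, rfl⟩
      rw [Matrix.mulVec_smul, hv0, smul_comm]
  rw [eigMult, hker, finrank_span_singleton hne0]

lemma knonneg : (0:ℝ) ≤ ((α 0 : ℝ) - (α 1 : ℝ) - ((α 0 : ℝ) - 1) / 2) ^ 2 + (α 0 : ℝ) * (α 1 : ℝ) := by
  positivity

lemma hq_plus (h1 : 1 ≤ α 0) (h2 : 2 ≤ α 1) :
    (((α 0 : ℝ) + (α 1 : ℝ) - 2 - ((α 0 : ℝ) - 1) / 2 +
        Real.sqrt (((α 0 : ℝ) - (α 1 : ℝ) - ((α 0 : ℝ) - 1) / 2) ^ 2 +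
          (α 0 : ℝ) * (α 1 : ℝ))) + 1 - (α 0 : ℝ)) *
    (((α 0 : ℝ) + (α 1 : ℝ) - 2 - ((α 0 : ℝ) - 1) / 2 +
        Real.sqrt (((α 0 : ℝ) - (α 1 : ℝ) - ((α 0 : ℝ) - 1) / 2) ^ 2 +
          (α 0 : ℝ) * (α 1 : ℝ))) + 2 - 2 * (α 1 : ℝ)) - (α 0 : ℝ) * (α 1 : ℝ) = 0 := by
  linear_combination Real.sq_sqrt (knonneg α)

lemma hq_minus (h1 : 1 ≤ α 0) (h2 : 2 ≤ α 1) :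
    (((α 0 : ℝ) + (α 1 : ℝ) - 2 - ((α 0 : ℝ) - 1) / 2 -
        Real.sqrt (((α 0 : ℝ) - (α 1 : ℝ) - ((α 0 : ℝ) - 1) / 2) ^ 2 +
          (α 0 : ℝ) * (α 1 : ℝ))) + 1 - (α 0 : ℝ)) *
    (((α 0 : ℝ) + (α 1 : ℝ) - 2 - ((α 0 : ℝ) - 1) / 2 -
        Real.sqrt (((α 0 : ℝ) - (α 1 : ℝ) - ((α 0 : ℝ) - 1) / 2) ^ 2 +
          (α 0 : ℝ) * (α 1 : ℝ))) + 2 - 2 * (α 1 : ℝ)) - (α 0 : ℝ) * (α 1 : ℝ) = 0 := by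
  linear_combination Real.sq_sqrt (knonneg α)

lemma partD (h1 : 1 ≤ α 0) (h2 : 2 ≤ α 1) (μ : ℝ) (x : (Σ i : Fin 2, Fin (α i)) → ℝ)
    (hx0 : x ≠ 0) (hx : (eccMatrix (Cgraph 2 α)).mulVec x = μ • x) :
    μ = -1 ∨ μ = -2 ∨
    μ = (α 0 : ℝ) + (α 1 : ℝ) - 2 - ((α 0 : ℝ) - 1) / 2 +
        Real.sqrt (((α 0 : ℝ) - (α 1 : ℝ) - ((α 0 : ℝ) - 1) / 2) ^ 2 + (α 0 : ℝ) * (α 1 : ℝ)) ∨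
    μ = (α 0 : ℝ) + (α 1 : ℝ) - 2 - ((α 0 : ℝ) - 1) / 2 -
        Real.sqrt (((α 0 : ℝ) - (α 1 : ℝ) - ((α 0 : ℝ) - 1) / 2) ^ 2 + (α 0 : ℝ) * (α 1 : ℝ)) := by
  by_cases e1 : μ = -1
  · exact Or.inl e1
  by_cases e2 : μ = -2
  · exact Or.inr (Or.inl e2)
  have hl1 : μ + 1 ≠ 0 := fun h => e1 (by linarith)
  have hl2 : μ + 2 ≠ 0 := fun h => e2 (by linarith)
  rw [eig_iff α h1 h2] at hx
  obtain ⟨ha, hb⟩ := hx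
  set j0 : Fin (α 0) := ⟨0, h1⟩ with hj0
  set j1 : Fin (α 1) := ⟨0, by omega⟩ with hj1
  have hconst0 : ∀ j, x ⟨0,j⟩ = x ⟨0,j0⟩ := by
    intro j
    have e1' := ha j; have e2' := ha j0
    have h3 : (μ+1) * x ⟨0,j⟩ = (μ+1) * x ⟨0,j0⟩ := by linarith
    exact mul_left_cancel₀ hl1 h3
  have hconst1 : ∀ j, x ⟨1,j⟩ = x ⟨1,j1⟩ := by
    intro j
    have e1' := hb j; have e2' := hb j1
    have h3 : (μ+2) * x ⟨1,j⟩ = (μ+2) * x ⟨1,j1⟩ := by linarith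
    exact mul_left_cancel₀ hl2 h3
  have hS0 : (∑ j' : Fin (α 0), x ⟨0,j'⟩) = (α 0 : ℝ) * x ⟨0,j0⟩ := by
    rw [Finset.sum_congr rfl fun j _ => hconst0 j, Finset.sum_const, Finset.card_univ,
      Fintype.card_fin, nsmul_eq_mul]
  have hS1 : (∑ j' : Fin (α 1), x ⟨1,j'⟩) = (α 1 : ℝ) * x ⟨1,j1⟩ := by
    rw [Finset.sum_congr rfl fun j _ => hconst1 j, Finset.sum_const, Finset.card_univ,
      Fintype.card_fin, nsmul_eq_mul]
  have eA := ha j0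
  have eB := hb j1
  rw [hS0, hS1] at eA eB
  have hA : (μ + 1 - (α 0 : ℝ)) * x ⟨0,j0⟩ = (α 1 : ℝ) * x ⟨1,j1⟩ := by linear_combination -eA
  have hB : (μ + 2 - 2 * (α 1 : ℝ)) * x ⟨1,j1⟩ = (α 0 : ℝ) * x ⟨0,j0⟩ := by linear_combination -eB
  have hne : x ⟨0,j0⟩ ≠ 0 ∨ x ⟨1,j1⟩ ≠ 0 := by
    by_contra hcon
    push_neg at hcon
    apply hx0
    funext v
    obtain ⟨i, j⟩ := v
    rcases fin2 i with h | h <;> subst h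
    · rw [hconst0 j]; exact hcon.1
    · rw [hconst1 j]; exact hcon.2
  have hΔ : ((μ + 1 - (α 0:ℝ)) * (μ + 2 - 2*(α 1:ℝ)) - (α 0:ℝ)*(α 1:ℝ)) = 0 := by
    rcases hne with h | h
    · have := mul_eq_zero.1 (show ((μ + 1 - (α 0:ℝ)) * (μ + 2 - 2*(α 1:ℝ))
          - (α 0:ℝ)*(α 1:ℝ)) * x ⟨0,j0⟩ = 0 by
        linear_combination (μ + 2 - 2*(α 1:ℝ)) * hA + (α 1:ℝ) * hB)
      tauto
    · have := mul_eq_zero.1 (show ((μ + 1 - (α 0:ℝ)) * (μ + 2 - 2*(α 1:ℝ))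
          - (α 0:ℝ)*(α 1:ℝ)) * x ⟨1,j1⟩ = 0 by
        linear_combination (μ + 1 - (α 0:ℝ)) * hB + (α 0:ℝ) * hA)
      tauto
  set m : ℝ := (α 0 : ℝ) + (α 1 : ℝ) - 2 - ((α 0 : ℝ) - 1) / 2 with hm
  set k : ℝ := ((α 0 : ℝ) - (α 1 : ℝ) - ((α 0 : ℝ) - 1) / 2) ^ 2 + (α 0 : ℝ) * (α 1 : ℝ) with hk
  have hsq : (μ - m) ^ 2 = k := by
    rw [hm, hk]; linear_combination hΔ
  have hroot : Real.sqrt k = |μ - m| := by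
    rw [← hsq, Real.sqrt_sq_eq_abs]
  rcases abs_cases (μ - m) with ⟨hh, -⟩ | ⟨hh, -⟩
  · right; right; left
    rw [hroot, hh]; ring
  · right; right; right
    rw [hroot, hh]; ring

/-- The eccentricity spectrum of `G = K_{α₁} ∨ α₂K₁ = C(α₁, α₂)` (with
`α₂ ≥ 2`): `-1` with multiplicity `α₁ - 1`, `-2` with multiplicity `α₂ - 1`,
and the two simple eigenvalues
`α₁ + α₂ - 2 - (α₁-1)/2 ± √((α₁ - α₂ - (α₁-1)/2)² + α₁α₂)`;
moreover, these are all the eigenvalues. -/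
theorem stmt19 (α : Fin 2 → ℕ) (h1 : 1 ≤ α 0) (h2 : 2 ≤ α 1) :
    eigMult (eccMatrix (Cgraph 2 α)) (-1) = α 0 - 1 ∧
    eigMult (eccMatrix (Cgraph 2 α)) (-2) = α 1 - 1 ∧
    eigMult (eccMatrix (Cgraph 2 α))
      ((α 0 : ℝ) + (α 1 : ℝ) - 2 - ((α 0 : ℝ) - 1) / 2 +
        Real.sqrt (((α 0 : ℝ) - (α 1 : ℝ) - ((α 0 : ℝ) - 1) / 2) ^ 2 +
          (α 0 : ℝ) * (α 1 : ℝ))) = 1 ∧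
    eigMult (eccMatrix (Cgraph 2 α))
      ((α 0 : ℝ) + (α 1 : ℝ) - 2 - ((α 0 : ℝ) - 1) / 2 -
        Real.sqrt (((α 0 : ℝ) - (α 1 : ℝ) - ((α 0 : ℝ) - 1) / 2) ^ 2 +
          (α 0 : ℝ) * (α 1 : ℝ))) = 1 ∧
    ∀ μ : ℝ, (∃ x : (Σ i : Fin 2, Fin (α i)) → ℝ, x ≠ 0 ∧
        (eccMatrix (Cgraph 2 α)).mulVec x = μ • x) →
      μ ∈ ({-1, -2,
        (α 0 : ℝ) + (α 1 : ℝ) - 2 - ((α 0 : ℝ) - 1) / 2 +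
          Real.sqrt (((α 0 : ℝ) - (α 1 : ℝ) - ((α 0 : ℝ) - 1) / 2) ^ 2 +
            (α 0 : ℝ) * (α 1 : ℝ)),
        (α 0 : ℝ) + (α 1 : ℝ) - 2 - ((α 0 : ℝ) - 1) / 2 -
          Real.sqrt (((α 0 : ℝ) - (α 1 : ℝ) - ((α 0 : ℝ) - 1) / 2) ^ 2 +
            (α 0 : ℝ) * (α 1 : ℝ))} : Set ℝ) := by
  refine ⟨partA α h1 h2, partB α h1 h2, partC α h1 h2 _ (hq_plus α h1 h2),
    partC α h1 h2 _ (hq_minus α h1 h2), ?_⟩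
  rintro μ ⟨x, hx0, hx⟩
  have hd := partD α h1 h2 μ x hx0 hx
  simp only [Set.mem_insert_iff, Set.mem_singleton_iff]
  tauto
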